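/- Let A be a unital *-algebra over ℂ and let (M,h') be a regular hermitian right A-module generated by n elements. Let B = Aⁿ ⊕ (Aⁿ)*, where (Aⁿ)* is regarded as a right A-module via (ω·a)(U) = a*·ω(U), and define the hermitian form b : B × B → A by b((U,ω),(V,η)) = η(U)* + ω(V). Then b is an invertible hermitian form, and there exists a module endomorphism p̂ : B → B with p̂² = p̂ which is orthogonal with respect to b (i.e. b(p̂(x),y) = b(x,p̂(y)) for all x,y ∈ B), such that (p̂(B), b|_{p̂(B)}) is isometric to (M,h'), i.e. there is a module isomorphism Φ : p̂(B) → M with b(x,y) = h'(Φ(x),Φ(y)) for all x,y ∈ p̂(B). -/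
import Mathlib


open MulOpposite

/-- A hermitian form on a right `A`-module `M`. -/
def IsHermitianForm {A M : Type*} [Ring A] [StarRing A] [AddCommGroup M]
    [Module Aᵐᵒᵖ M] (h : M → M → A) : Prop :=
  (∀ m₁ m₂, star (h m₁ m₂) = h m₂ m₁) ∧
  (∀ m₁ m₂ (a : A), h m₁ (op a • m₂) = h m₁ m₂ * a) ∧
  (∀ m₁ m₂ m, h (m₁ + m₂) m = h m₁ m + h m₂ m)

/-- An element of the dual module `M* = Hom_A(M,A)` of the right `A`-module `M`. -/
def IsDualElem {A M : Type*} [Ring A] [AddCommGroup M] [Module Aᵐᵒᵖ M]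
    (ω : M → A) : Prop :=
  (∀ m₁ m₂, ω (m₁ + m₂) = ω m₁ + ω m₂) ∧ (∀ (a : A) m, ω (op a • m) = ω m * a)

/-- A hermitian form `h` is invertible if `ĥ : M → M*` is a bijection. -/
def IsInvertibleForm {A M : Type*} [Ring A] [StarRing A] [AddCommGroup M]
    [Module Aᵐᵒᵖ M] (h : M → M → A) : Prop :=
  (∀ m₁ m₂, (∀ x, h m₁ x = h m₂ x) → m₁ = m₂) ∧
  (∀ ω : M → A, IsDualElem ω → ∃ m, ∀ x, h m x = ω x)

/-- The right `A`-module `B = Aⁿ ⊕ (Aⁿ)*`, where a dual element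
`ω ∈ (Aⁿ)*` is identified with its coordinates `ω_i = ω(ê_i)` (so that
`ω(U) = Σ_i ω_i·U_i`), and `(Aⁿ)*` carries the right action `(ω·a)(U) = a*·ω(U)`.
The right action of `a ∈ A` on `B` is therefore
`(U,ω)·a = (U·a, star a·ω)` componentwise. -/
def bAct {A : Type*} [Ring A] [StarRing A] {n : ℕ}
    (x : (Fin n → A) × (Fin n → A)) (a : A) : (Fin n → A) × (Fin n → A) :=
  (fun i => x.1 i * a, fun i => star a * x.2 i)

/-- The hermitian form `b((U,ω),(V,η)) = η(U)* + ω(V)` on `B = Aⁿ ⊕ (Aⁿ)*`. -/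
def bForm {A : Type*} [Ring A] [StarRing A] {n : ℕ}
    (x y : (Fin n → A) × (Fin n → A)) : A :=
  star (∑ i, y.2 i * x.1 i) + ∑ i, x.2 i * y.1 i

/-- A dual element of the right module `B = Aⁿ ⊕ (Aⁿ)*`: an additive, right
`A`-linear map `B → A`. -/
def IsDualElemB {A : Type*} [Ring A] [StarRing A] {n : ℕ}
    (χ : (Fin n → A) × (Fin n → A) → A) : Prop :=
  (∀ x y, χ (x + y) = χ x + χ y) ∧ (∀ x a, χ (bAct x a) = χ x * a)

section Aux
variable {A M : Type*} [Ring A] [StarRing A] [Algebra ℂ A] [StarModule ℂ A]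
    [AddCommGroup M] [Module Aᵐᵒᵖ M] {n : ℕ}

lemma bForm_star (x y : (Fin n → A) × (Fin n → A)) : star (bForm x y) = bForm y x := by
  simp [bForm, add_comm]

lemma bForm_smul₂ (x y : (Fin n → A) × (Fin n → A)) (a : A) :
    bForm x (bAct y a) = bForm x y * a := by
  simp [bForm, bAct, Finset.mul_sum, Finset.sum_mul, mul_assoc, add_mul, star_sum, star_mul]

lemma bForm_add₁ (x₁ x₂ y : (Fin n → A) × (Fin n → A)) :
    bForm (x₁ + x₂) y = bForm x₁ y + bForm x₂ y := by
  simp only [bForm, Prod.fst_add, Prod.snd_add, Pi.add_apply, mul_add, add_mul,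
    Finset.sum_add_distrib, star_add]
  abel

lemma bForm_add₂ (x y₁ y₂ : (Fin n → A) × (Fin n → A)) :
    bForm x (y₁ + y₂) = bForm x y₁ + bForm x y₂ := by
  rw [← bForm_star (y₁ + y₂) x, bForm_add₁, star_add, bForm_star, bForm_star]

lemma bForm_smul₁ (x y : (Fin n → A) × (Fin n → A)) (a : A) :
    bForm (bAct x a) y = star a * bForm x y := by
  rw [← bForm_star, bForm_smul₂, star_mul, bForm_star]

end Aux

/-- Every regular hermitian right `A`-module `(M,h')` generated by
`n` elements is isometric to the image of a projection `p̂` of the free module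
`B = Aⁿ ⊕ (Aⁿ)*`, which is orthogonal with respect to the invertible hermitian
form `b((U,ω),(V,η)) = η(U)* + ω(V)`. -/
theorem regular_hermitian_module_embeds_orthogonally
    {A M : Type*} [Ring A] [StarRing A] [Algebra ℂ A] [StarModule ℂ A]
    [AddCommGroup M] [Module Aᵐᵒᵖ M]
    (n : ℕ) (e : Fin n → M)
    (hgen : Submodule.span Aᵐᵒᵖ (Set.range e) = ⊤)
    (h' : M → M → A)
    (hherm : IsHermitianForm h') (hinv : IsInvertibleForm h')
    (hproj : Module.Projective Aᵐᵒᵖ M) :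
    -- b is a hermitian form on B
    ((∀ x y : (Fin n → A) × (Fin n → A), star (bForm x y) = bForm y x) ∧
     (∀ (x y : (Fin n → A) × (Fin n → A)) (a : A), bForm x (bAct y a) = bForm x y * a) ∧
     (∀ x₁ x₂ y : (Fin n → A) × (Fin n → A), bForm (x₁ + x₂) y = bForm x₁ y + bForm x₂ y)) ∧
    -- b is invertible
    ((∀ x y : (Fin n → A) × (Fin n → A), (∀ z, bForm x z = bForm y z) → x = y) ∧
     (∀ χ : (Fin n → A) × (Fin n → A) → A, IsDualElemB χ → ∃ x, ∀ z, bForm x z = χ z)) ∧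
    -- there is an orthogonal projection p̂ of B whose image is isometric to (M,h')
    (∃ phat : (Fin n → A) × (Fin n → A) → (Fin n → A) × (Fin n → A),
      (∀ x y, phat (x + y) = phat x + phat y) ∧
      (∀ x a, phat (bAct x a) = bAct (phat x) a) ∧
      (∀ x, phat (phat x) = phat x) ∧
      (∀ x y, bForm (phat x) y = bForm x (phat y)) ∧
      ∃ Φ : (Fin n → A) × (Fin n → A) → M,
        (∀ x y, phat x = x → phat y = y → Φ (x + y) = Φ x + Φ y) ∧
        (∀ x a, phat x = x → Φ (bAct x a) = op a • Φ x) ∧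
        (∀ x y, phat x = x → phat y = y → Φ x = Φ y → x = y) ∧
        (∀ m : M, ∃ x, phat x = x ∧ Φ x = m) ∧
        (∀ x y, phat x = x → phat y = y → bForm x y = h' (Φ x) (Φ y))) := by
  classical
  obtain ⟨hstar, hright, haddl⟩ := hherm
  obtain ⟨huniq, hsurj⟩ := hinv
  -- derived facts about h'
  have haddr : ∀ m m₁ m₂, h' m (m₁ + m₂) = h' m m₁ + h' m m₂ := by
    intro m m₁ m₂
    rw [← hstar (m₁ + m₂) m, haddl, star_add, hstar, hstar]
  have hleft : ∀ (a : A) m₁ m₂, h' (op a • m₁) m₂ = star a * h' m₁ m₂ := by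
    intro a m₁ m₂
    rw [← hstar m₂ (op a • m₁), hright, star_mul, hstar]
  have hsum_r : ∀ (m : M) (f : Fin n → M), h' m (∑ i, f i) = ∑ i, h' m (f i) := by
    intro m f
    exact map_sum (AddMonoidHom.mk' (h' m) (haddr m)) f Finset.univ
  -- the surjection ε : Aⁿ → M
  let epsL : (Fin n → Aᵐᵒᵖ) →ₗ[Aᵐᵒᵖ] M :=
    { toFun := fun c => ∑ i, c i • e i
      map_add' := by intro x y; simp [add_smul, Finset.sum_add_distrib]
      map_smul' := by intro a x; simp [Finset.smul_sum, smul_smul] }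
  have hepsSurj : Function.Surjective epsL := by
    intro m
    have hm : m ∈ Submodule.span Aᵐᵒᵖ (Set.range e) := by rw [hgen]; trivial
    obtain ⟨c, hc⟩ := (Submodule.mem_span_range_iff_exists_fun Aᵐᵒᵖ).mp hm
    exact ⟨c, hc⟩
  obtain ⟨σL, hσL⟩ := Module.projective_lifting_property epsL LinearMap.id hepsSurj
  set σ : M → Fin n → A := fun m i => unop (σL m i) with hσdef
  have hσret : ∀ m : M, ∑ i, op (σ m i) • e i = m := by
    intro m
    have := congrFun (congrArg (fun f => f.toFun) hσL) m
    simpa [epsL, σ] using this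
  have hσadd : ∀ m₁ m₂, σ (m₁ + m₂) = σ m₁ + σ m₂ := by
    intro m₁ m₂; funext i; simp [σ, map_add]
  have hσsmul : ∀ (a : A) m, σ (op a • m) = fun i => σ m i * a := by
    intro a m; funext i
    have := congrFun (σL.map_smul (op a) m) i
    simp only [Pi.smul_apply, smul_eq_mul] at this
    simp [σ, this]
  -- the embedding ι : M → B
  set ι : M → (Fin n → A) × (Fin n → A) :=
    fun m => (σ m, fun i => (2⁻¹ : ℂ) • h' m (e i)) with hιdef
  have star_half : star (2⁻¹ : ℂ) = 2⁻¹ := by norm_num [Complex.ext_iff]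
  have hι_add : ∀ m₁ m₂, ι (m₁ + m₂) = ι m₁ + ι m₂ := by
    intro m₁ m₂
    refine Prod.ext ?_ ?_
    · simp [ι, hσadd]
    · funext i; simp [ι, haddl, smul_add]
  have hι_smul : ∀ (a : A) m, ι (op a • m) = bAct (ι m) a := by
    intro a m
    refine Prod.ext ?_ ?_
    · funext i; simp [ι, bAct, hσsmul]
    · funext i; simp [ι, bAct, hleft, mul_smul_comm]
  -- ι is isometric
  have key : ∀ (m : M) (U : Fin n → A), ∑ i, h' m (e i) * U i = h' m (∑ i, op (U i) • e i) := by
    intro m U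
    rw [hsum_r]
    exact Finset.sum_congr rfl fun i _ => (hright m (e i) (U i)).symm
  have hι_iso : ∀ m m', bForm (ι m) (ι m') = h' m m' := by
    intro m m'
    have t2 : ∑ i, ((2⁻¹ : ℂ) • h' m (e i)) * σ m' i = (2⁻¹ : ℂ) • h' m m' := by
      simp only [smul_mul_assoc, ← Finset.smul_sum]
      rw [key, hσret]
    have t1 : ∑ i, ((2⁻¹ : ℂ) • h' m' (e i)) * σ m i = (2⁻¹ : ℂ) • h' m' m := by
      simp only [smul_mul_assoc, ← Finset.smul_sum]
      rw [key, hσret]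
    show star (∑ i, ((2⁻¹ : ℂ) • h' m' (e i)) * σ m i)
        + ∑ i, ((2⁻¹ : ℂ) • h' m (e i)) * σ m' i = h' m m'
    rw [t1, t2, star_smul, star_half, hstar, ← add_smul]
    norm_num
  -- the retraction Ψ : B → M, defined as the b-adjoint of ι
  have hdual : ∀ x : (Fin n → A) × (Fin n → A), IsDualElem (fun m' => bForm x (ι m')) := by
    intro x
    constructor
    · intro m₁ m₂
      show bForm x (ι (m₁ + m₂)) = bForm x (ι m₁) + bForm x (ι m₂)
      rw [hι_add, bForm_add₂]
    · intro a m
      show bForm x (ι (op a • m)) = bForm x (ι m) * a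
      rw [hι_smul, bForm_smul₂]
  choose Ψ hΨ using fun x => hsurj _ (hdual x)
  -- hΨ : ∀ x m', h' (Ψ x) m' = bForm x (ι m')
  have hΨι : ∀ m, Ψ (ι m) = m := by
    intro m
    exact huniq _ _ fun m' => by rw [hΨ, hι_iso]
  have hΨadd : ∀ x y, Ψ (x + y) = Ψ x + Ψ y := by
    intro x y
    refine huniq _ _ fun m' => ?_
    rw [hΨ, bForm_add₁, haddl, hΨ, hΨ]
  have hΨsmul : ∀ x a, Ψ (bAct x a) = op a • Ψ x := by
    intro x a
    refine huniq _ _ fun m' => ?_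
    rw [hΨ, bForm_smul₁, hleft, hΨ]
  refine ⟨⟨bForm_star, bForm_smul₂, bForm_add₁⟩, ⟨?_, ?_⟩, ?_⟩
  · -- injectivity of b̂
    intro x y hxy
    have h2 : ∀ (w : (Fin n → A) × (Fin n → A)) (j),
        bForm w ((Pi.single j 1 : Fin n → A), (0 : Fin n → A)) = w.2 j := by
      intro w j
      simp [bForm, Pi.single_apply]
    have h1 : ∀ (w : (Fin n → A) × (Fin n → A)) (j),
        bForm w ((0 : Fin n → A), (Pi.single j 1 : Fin n → A)) = star (w.1 j) := by
      intro w j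
      simp [bForm, Pi.single_apply]
    refine Prod.ext (funext fun j => ?_) (funext fun j => ?_)
    · have := hxy ((0 : Fin n → A), (Pi.single j 1 : Fin n → A))
      rw [h1, h1] at this
      simpa using congrArg star this
    · have := hxy ((Pi.single j 1 : Fin n → A), (0 : Fin n → A))
      rw [h2, h2] at this
      exact this
  · -- surjectivity of b̂
    intro χ ⟨χadd, χsmul⟩
    have χ0 : χ 0 = 0 := by
      have := χadd 0 0
      simpa using this.symm
    have χsum : ∀ {ι : Type} (s : Finset ι) (f : ι → (Fin n → A) × (Fin n → A)),
        χ (∑ i ∈ s, f i) = ∑ i ∈ s, χ (f i) := by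
      intro ι s f
      exact map_sum (AddMonoidHom.mk' χ χadd) f s
    refine ⟨(fun j => star (χ (0, Pi.single j 1)), fun j => χ (Pi.single j 1, 0)), ?_⟩
    intro z
    have hdecomp : z = (∑ j, bAct (Pi.single j 1, 0) (z.1 j))
        + ∑ j, bAct (0, Pi.single j 1) (star (z.2 j)) := by
      refine Prod.ext (funext fun i => ?_) (funext fun i => ?_)
      · simp [bAct, Pi.single_apply, Finset.sum_apply, Prod.fst_sum]
      · simp [bAct, Pi.single_apply, Finset.sum_apply, Prod.snd_sum]
    conv_rhs => rw [hdecomp]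
    rw [χadd, χsum, χsum]
    simp only [χsmul]
    show star (∑ i, z.2 i * star (χ (0, Pi.single i 1))) + ∑ i, χ (Pi.single i 1, 0) * z.1 i = _
    simp [star_sum, star_mul, mul_comm, add_comm]
  · -- the orthogonal projection and isometry
    refine ⟨fun x => ι (Ψ x), ?_, ?_, ?_, ?_, Ψ, ?_, ?_, ?_, ?_, ?_⟩
    · intro x y
      show ι (Ψ (x + y)) = ι (Ψ x) + ι (Ψ y)
      rw [hΨadd, hι_add]
    · intro x a
      show ι (Ψ (bAct x a)) = bAct (ι (Ψ x)) a
      rw [hΨsmul, hι_smul]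
    · intro x
      show ι (Ψ (ι (Ψ x))) = ι (Ψ x)
      rw [hΨι]
    · intro x y
      show bForm (ι (Ψ x)) y = bForm x (ι (Ψ y))
      rw [← bForm_star y (ι (Ψ x)), ← hΨ, ← hΨ, hstar]
    · intro x y _ _; exact hΨadd x y
    · intro x a _; exact hΨsmul x a
    · intro x y hx hy hΦ
      have hx' : ι (Ψ x) = x := hx
      have hy' : ι (Ψ y) = y := hy
      calc x = ι (Ψ x) := hx'.symm
        _ = ι (Ψ y) := by rw [hΦ]
        _ = y := hy'
    · intro m
      refine ⟨ι m, ?_, hΨι m⟩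
      show ι (Ψ (ι m)) = ι m
      rw [hΨι]
    · intro x y hx hy
      have hx' : ι (Ψ x) = x := hx
      have hy' : ι (Ψ y) = y := hy
      calc bForm x y = bForm (ι (Ψ x)) (ι (Ψ y)) := by rw [hx', hy']
        _ = h' (Ψ x) (Ψ y) := hι_iso _ _
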